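/- If σ ∈ S_n is 132-avoiding, then the connected component D_{(1,1)}(σ) of its Rothe diagram containing cell (1,1) is the Young diagram of a partition, i.e., it is left-justified with weakly decreasing row lengths. -/

import Mathlib

/-- The adjacent transposition `s_a` (1-indexed letter `a`) acting on positions `Fin n`. -/
def adjT (n a : ℕ) : Equiv.Perm (Fin n) :=
  if h : 1 ≤ a ∧ a < n then Equiv.swap ⟨a - 1, by omega⟩ ⟨a, h.2⟩ else 1

/-- The permutation `s_{w_1} ∘ s_{w_2} ∘ ⋯ ∘ s_{w_m}` of a word, transpositions acting on
positions composed from the left (`s_{w_1}` applied first to the identity). -/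
def permOfWord (n : ℕ) (w : List ℕ) : Equiv.Perm (Fin n) :=
  (w.map (adjT n)).prod

/-- The set of inversions of a permutation. -/
def invSet {n : ℕ} (σ : Equiv.Perm (Fin n)) : Set (Fin n × Fin n) :=
  {p | p.1 < p.2 ∧ σ p.2 < σ p.1}

/-- The number of inversions. -/
noncomputable def invNum {n : ℕ} (σ : Equiv.Perm (Fin n)) : ℕ := (invSet σ).ncard

/-- `w` is a reduced word for `σ`: letters in `[n-1]`, the product of the corresponding
adjacent transpositions is `σ`, and the length is `inv σ`. -/
def IsReducedWord (n : ℕ) (σ : Equiv.Perm (Fin n)) (w : List ℕ) : Prop :=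
  (∀ a ∈ w, 1 ≤ a ∧ a < n) ∧ permOfWord n w = σ ∧ w.length = invNum σ

/-- `σ` avoids the pattern 132. -/
def Avoids132 {n : ℕ} (σ : Equiv.Perm (Fin n)) : Prop :=
  ¬ ∃ i1 i2 i3 : Fin n, i1 < i2 ∧ i2 < i3 ∧ σ i1 < σ i3 ∧ σ i3 < σ i2

/-- `σ` avoids the pattern 312. -/
def Avoids312 {n : ℕ} (σ : Equiv.Perm (Fin n)) : Prop :=
  ¬ ∃ i1 i2 i3 : Fin n, i1 < i2 ∧ i2 < i3 ∧ σ i2 < σ i3 ∧ σ i3 < σ i1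

/-- The Rothe diagram of `σ` (permutation matrix with 1s at `(σ i, i)`, 0-indexed):
cells strictly north of the 1 in their column and strictly west of the 1 in their row. -/
def rothe {n : ℕ} (σ : Equiv.Perm (Fin n)) : Set (Fin n × Fin n) :=
  {p | p.1 < σ p.2 ∧ p.2 < σ.symm p.1}

/-- Two cells are adjacent if they share an edge. -/
def adjCell {n : ℕ} (p q : Fin n × Fin n) : Prop :=
  (p.1 = q.1 ∧ ((p.2 : ℕ) + 1 = q.2 ∨ (q.2 : ℕ) + 1 = p.2)) ∨
  (p.2 = q.2 ∧ ((p.1 : ℕ) + 1 = q.1 ∨ (q.1 : ℕ) + 1 = p.1))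

/-- The connected component of the Rothe diagram containing the (0-indexed) cell `(0,0)`,
empty if `(0,0)` is not in the diagram. -/
def comp11 {n : ℕ} (σ : Equiv.Perm (Fin n)) : Set (Fin n × Fin n) :=
  {p | ∃ h0 : 0 < n,
    Relation.ReflTransGen (fun a b => a ∈ rothe σ ∧ b ∈ rothe σ ∧ adjCell a b)
      (⟨⟨0, h0⟩, ⟨0, h0⟩⟩) p ∧
    p ∈ rothe σ ∧ ((⟨⟨0, h0⟩, ⟨0, h0⟩⟩ : Fin n × Fin n)) ∈ rothe σ}

/-- Edelman–Greene insertion of `x` into a single (strictly increasing) row: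
returns the new row and the optional entry bumped into the next row. -/
def insRow (x : ℕ) : List ℕ → List ℕ × Option ℕ
  | [] => ([x], none)
  | z :: zs =>
    if z < x then
      let r := insRow x zs
      (z :: r.1, r.2)
    else if z = x then (z :: zs, some (z + 1))
    else (x :: zs, some z)

/-- Edelman–Greene insertion of `x` into a tableau (list of rows). -/
def insTab (x : ℕ) : List (List ℕ) → List (List ℕ)
  | [] => [[x]]
  | r :: rs =>
    let p := insRow x r
    match p.2 with
    | none => p.1 :: rs
    | some y => p.1 :: insTab y rs

/-- The Edelman–Greene insertion tableau `P(w)`. -/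
def Ptab (w : List ℕ) : List (List ℕ) := w.foldl (fun t x => insTab x t) []

/-- Add the label `k` to the recording tableau `q` at the unique new cell of shape `p`. -/
def recordCell (k : ℕ) : List (List ℕ) → List (List ℕ) → List (List ℕ)
  | _, [] => []
  | [], _ :: _ => [[k]]
  | q :: qs, p :: ps =>
    if q.length < p.length then (q ++ [k]) :: qs else q :: recordCell k qs ps

/-- The Edelman–Greene recording tableau `Q(w) = EG(w)`. -/
def Qtab (w : List ℕ) : List (List ℕ) :=
  (w.foldl (fun pq x =>
      let P' := insTab x pq.1
      (P', recordCell (pq.2.flatten.length + 1) pq.2 P'))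
    (([], []) : List (List ℕ) × List (List ℕ))).2

/-- A tableau is frozen if the cell in (0-indexed) row `i`, column `j` contains `i + j + 1`. -/
def Frozen (P : List (List ℕ)) : Prop :=
  ∀ i j, i < P.length → j < (P.getD i []).length → (P.getD i []).getD j 0 = i + j + 1

/-- All rows strictly increasing. -/
def RowStrict (P : List (List ℕ)) : Prop := ∀ r ∈ P, List.Pairwise (· < ·) r

/-- All columns strictly increasing. -/
def ColStrict (P : List (List ℕ)) : Prop :=
  ∀ i j, i + 1 < P.length → j < (P.getD (i + 1) []).length →
    (P.getD i []).getD j 0 < (P.getD (i + 1) []).getD j 0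

/-- Valid Young-diagram shape: nonempty rows of weakly decreasing lengths. -/
def TabShape (P : List (List ℕ)) : Prop :=
  (∀ r ∈ P, r ≠ []) ∧ ∀ i, i + 1 < P.length → (P.getD (i + 1) []).length ≤ (P.getD i []).length

/-- The reading word: rows left to right, from the bottom row up. -/
def readingWord (P : List (List ℕ)) : List ℕ := P.reverse.flatten

/-- A standard Young tableau: valid shape, strictly increasing rows and columns, and the
entries are `1, …, N` each exactly once. -/
def IsStandard (Q : List (List ℕ)) : Prop :=
  TabShape Q ∧ RowStrict Q ∧ ColStrict Q ∧ Q.flatten.Perm (List.range' 1 Q.flatten.length)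

/-- `Q` has the staircase shape `sc_n = (n-1, n-2, …, 1)`. -/
def StaircaseShape (n : ℕ) (Q : List (List ℕ)) : Prop :=
  Q.length = n - 1 ∧ ∀ i, i < n - 1 → (Q.getD i []).length = n - 1 - i

/-- A sorting network: a reduced word of the reverse permutation in `S_n`. -/
def IsSortingNetwork (n : ℕ) (w : List ℕ) : Prop :=
  IsReducedWord n Fin.revPerm w

/-- Every intermediate permutation of the word avoids 132. -/
def Avoiding132 (n : ℕ) (w : List ℕ) : Prop :=
  ∀ k, k ≤ w.length → Avoids132 (permOfWord n (w.take k))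

/-- Every intermediate permutation of the word avoids 312. -/
def Avoiding312 (n : ℕ) (w : List ℕ) : Prop :=
  ∀ k, k ≤ w.length → Avoids312 (permOfWord n (w.take k))

/-- `c` is the column word of `Q`: its `k`-th letter (1-indexed) is the (1-indexed) column
of the entry `k` in `Q`. -/
def IsColumnWord (Q : List (List ℕ)) (c : List ℕ) : Prop :=
  c.length = Q.flatten.length ∧
  ∀ k, k < c.length → ∃ i j, i < Q.length ∧ j < (Q.getD i []).length ∧
    (Q.getD i []).getD j 0 = k + 1 ∧ c.getD k 0 = j + 1

/-- All anti-diagonals of `Q` increase downwards: `Q_{i,j} > Q_{i-1,j+1}` (1-indexed). -/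
def AntiDiagDown (Q : List (List ℕ)) : Prop :=
  ∀ i j, i + 1 < Q.length → j < (Q.getD (i + 1) []).length → j + 1 < (Q.getD i []).length →
    (Q.getD i []).getD (j + 1) 0 < (Q.getD (i + 1) []).getD j 0

lemma rothe_lower {n : ℕ} {σ : Equiv.Perm (Fin n)} (h : Avoids132 σ)
    {i i' j j' : Fin n} (hi : i' ≤ i) (hj : j' ≤ j) (hm : (i, j) ∈ rothe σ) :
    (i', j') ∈ rothe σ := by
  obtain ⟨h1, h2⟩ := hm
  simp only [rothe, Set.mem_setOf_eq] at h1 h2 ⊢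
  constructor
  · -- i' < σ j'
    by_contra hc
    push_neg at hc
    -- hc : σ j' ≤ i'
    apply h
    have hji : σ j' < i := by
      rcases lt_or_eq_of_le (le_trans hc (le_trans hi (le_of_lt h1))) with h' | h'
      · rcases lt_or_eq_of_le (le_trans hc hi) with h'' | h''
        · exact h''
        · exfalso
          have : j' = σ.symm i := by
            apply σ.injective; simpa using h''
          rw [this] at hj
          exact absurd (lt_of_le_of_lt hj h2) (lt_irrefl _)
      · exfalso
        have : j' = j := σ.injective h'
        rw [this] at hc
        exact absurd (lt_of_le_of_lt hc (lt_of_le_of_lt hi h1)) (lt_irrefl _)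
    have hj'j : j' < j := by
      rcases lt_or_eq_of_le hj with h' | h'
      · exact h'
      · exfalso; rw [h'] at hji; exact absurd (lt_trans hji h1) (lt_irrefl _)
    refine ⟨j', j, σ.symm i, hj'j, h2, ?_, ?_⟩
    · simpa using hji
    · simpa using h1
  · -- j' < σ.symm i'
    by_contra hc
    push_neg at hc
    -- hc : σ.symm i' ≤ j'
    apply h
    set a := σ.symm i' with ha
    have hsa : σ a = i' := by simp [ha]
    have haj : a < j := by
      rcases lt_or_eq_of_le (le_trans hc hj) with h' | h'
      · exact h'
      · exfalso
        rw [h'] at hsa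
        rw [hsa] at h1
        exact absurd (lt_of_le_of_lt hi h1) (lt_irrefl _)
    have hic : a < σ.symm i := lt_trans haj h2
    have hii : i' < i := by
      rcases lt_or_eq_of_le hi with h' | h'
      · exact h'
      · exfalso
        have : a = σ.symm i := by rw [ha, h']
        rw [this] at hic; exact absurd hic (lt_irrefl _)
    refine ⟨a, j, σ.symm i, haj, h2, ?_, ?_⟩
    · rw [hsa]; simpa using hii
    · simpa using h1

section Reach
variable {n : ℕ} {σ : Equiv.Perm (Fin n)}

private def R (σ : Equiv.Perm (Fin n)) : (Fin n × Fin n) → (Fin n × Fin n) → Prop :=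
  fun a b => a ∈ rothe σ ∧ b ∈ rothe σ ∧ adjCell a b

lemma reach_vert (h : Avoids132 σ) :
    ∀ k : ℕ, ∀ i i' j : Fin n, (i : ℕ) = (i' : ℕ) + k → (i, j) ∈ rothe σ →
      Relation.ReflTransGen (R σ) (i, j) (i', j) := by
  intro k
  induction k with
  | zero =>
    intro i i' j hk _
    have : i = i' := Fin.ext (by omega)
    rw [this]
  | succ k ih =>
    intro i i' j hk hm
    have hlt : (i' : ℕ) + k < n := by omega
    set im : Fin n := ⟨(i' : ℕ) + k, hlt⟩ with him
    have hle : im ≤ i := by simp [Fin.le_def, him]; omega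
    have hm' : (im, j) ∈ rothe σ := rothe_lower h hle (le_refl j) hm
    refine Relation.ReflTransGen.head ⟨hm, hm', ?_⟩ (ih im i' j (by simp [him]) hm')
    right
    exact ⟨rfl, Or.inr (by simp [him]; omega)⟩

lemma reach_horiz (h : Avoids132 σ) :
    ∀ k : ℕ, ∀ i j j' : Fin n, (j : ℕ) = (j' : ℕ) + k → (i, j) ∈ rothe σ →
      Relation.ReflTransGen (R σ) (i, j) (i, j') := by
  intro k
  induction k with
  | zero =>
    intro i j j' hk _
    have : j = j' := Fin.ext (by omega)
    rw [this]
  | succ k ih =>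
    intro i j j' hk hm
    have hlt : (j' : ℕ) + k < n := by omega
    set jm : Fin n := ⟨(j' : ℕ) + k, hlt⟩ with hjm
    have hle : jm ≤ j := by simp [Fin.le_def, hjm]; omega
    have hm' : (i, jm) ∈ rothe σ := rothe_lower h (le_refl i) hle hm
    refine Relation.ReflTransGen.head ⟨hm, hm', ?_⟩ (ih i jm j' (by simp [hjm]) hm')
    left
    exact ⟨rfl, Or.inr (by simp [hjm]; omega)⟩

end Reach

/-- for 132-avoiding `σ`, the top-left component of the Rothe diagram is the
Young diagram of a partition, i.e. it is a lower set: top- and left-justified with weakly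
decreasing row lengths. -/
theorem comp11_isLowerSet (n : ℕ) (σ : Equiv.Perm (Fin n)) (h : Avoids132 σ) :
    ∀ p q : Fin n × Fin n, p ∈ comp11 σ → q.1 ≤ p.1 → q.2 ≤ p.2 → q ∈ comp11 σ := by
  intro p q hp hq1 hq2
  obtain ⟨h0, hre, hpr, h00⟩ := hp
  have hpr' : (p.1, p.2) ∈ rothe σ := hpr
  have hmid : (q.1, p.2) ∈ rothe σ := rothe_lower h hq1 (le_refl p.2) hpr'
  have hqr : (q.1, q.2) ∈ rothe σ := rothe_lower h (le_refl q.1) hq2 hmid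
  have hv : Relation.ReflTransGen (R σ) (p.1, p.2) (q.1, p.2) :=
    reach_vert h ((p.1 : ℕ) - (q.1 : ℕ)) p.1 q.1 p.2 (by have := hq1; omega) hpr'
  have hh : Relation.ReflTransGen (R σ) (q.1, p.2) (q.1, q.2) :=
    reach_horiz h ((p.2 : ℕ) - (q.2 : ℕ)) q.1 p.2 q.2 (by have := hq2; omega) hmid
  refine ⟨h0, ?_, hqr, h00⟩
  exact Relation.ReflTransGen.trans hre (Relation.ReflTransGen.trans hv hh)
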